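/- arXiv:2012.10048 — 2 statements merged into one kernel-verified Lean document; each statement's English description precedes it below -/
import Mathlib

section
/- Let A_p(x,μ) = √(π/2)·p₁·[erf((μ+iω₀)/√(2ε)) - erf((μ₀+iω₀)/√(2ε))]·e^{(μ+iω₀)²/(2ε)} + √(π/2)·p₂ cos(x)·[erf((μ+iω₀-εd)/√(2ε)) - erf((μ₀+iω₀-εd)/√(2ε))]·e^{(μ+iω₀-εd)²/(2ε)}. Then A_p satisfies the linear CGL equation ε ∂_μ A_p = (μ+iω₀)A_p + √ε (p₁ + p₂ cos x) + ε d ∂_x² A_p with A_p(x,μ₀) = 0. -/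
open intervalIntegral Metric

/-- The entire complex error function `erf z = (2/√π) ∫₀^z e^{-t²} dt`,
parametrized along the straight segment from `0` to `z`. -/
noncomputable def cerf (z : ℂ) : ℂ :=
  (2 / Real.sqrt Real.pi : ℝ) * z * ∫ t in (0:ℝ)..1, Complex.exp (-(z * t)^2)


lemma hasDerivAt_g (z : ℂ) :
    HasDerivAt (fun z : ℂ => ∫ t in (0:ℝ)..1, Complex.exp (-(z * t)^2))
      (∫ t in (0:ℝ)..1, (-2*z*(t:ℂ)^2) * Complex.exp (-(z * t)^2)) z := by
  have hcont : ∀ w : ℂ, Continuous fun t : ℝ => Complex.exp (-(w * t)^2) := by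
    intro w; fun_prop
  have hcont' : ∀ w : ℂ, Continuous fun t : ℝ => (-2*w*(t:ℂ)^2) * Complex.exp (-(w * t)^2) := by
    intro w; fun_prop
  refine (intervalIntegral.hasDerivAt_integral_of_dominated_loc_of_deriv_le
      (F := fun w (t:ℝ) => Complex.exp (-(w * t)^2))
      (F' := fun w (t:ℝ) => (-2*w*(t:ℂ)^2) * Complex.exp (-(w * t)^2))
      (bound := fun _ => 2*(‖z‖+1)*Real.exp ((‖z‖+1)^2))
      (ball_mem_nhds z one_pos) ?_ ?_ ?_ ?_ ?_ ?_).2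
  · exact Filter.Eventually.of_forall fun w => (hcont w).aestronglyMeasurable
  · exact (hcont z).intervalIntegrable 0 1
  · exact (hcont' z).aestronglyMeasurable
  · refine Filter.Eventually.of_forall fun t ht w hw => ?_
    rw [Set.uIoc_of_le (by norm_num : (0:ℝ) ≤ 1)] at ht
    have ht0 : 0 ≤ t := le_of_lt ht.1
    have ht1 : t ≤ 1 := ht.2
    have hwb : ‖w‖ ≤ ‖z‖ + 1 := by
      have := mem_ball_iff_norm.mp hw
      have := norm_sub_norm_le w z
      linarith
    have hz1 : (0:ℝ) ≤ ‖z‖ + 1 := by positivity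
    have h1 : ‖(-2*w*(t:ℂ)^2)‖ ≤ 2*(‖z‖+1) := by
      simp only [norm_mul, norm_neg, norm_pow, Complex.norm_ofNat, Complex.norm_real,
        Real.norm_eq_abs, _root_.abs_of_nonneg ht0]
      have ht2 : t^2 ≤ 1 := by nlinarith
      nlinarith [norm_nonneg w, ht2, hwb]
    have h2 : ‖Complex.exp (-(w * t)^2)‖ ≤ Real.exp ((‖z‖+1)^2) := by
      rw [Complex.norm_exp]
      apply Real.exp_le_exp.mpr
      calc (-(w * t)^2).re ≤ ‖(-(w * t)^2)‖ := Complex.re_le_norm _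
        _ = (‖w‖ * |t|)^2 := by simp [norm_pow, mul_pow]
        _ ≤ (‖z‖+1)^2 := by
            apply pow_le_pow_left₀ (by positivity)
            rw [_root_.abs_of_nonneg ht0]
            nlinarith [norm_nonneg w]
    calc ‖(-2*w*(t:ℂ)^2) * Complex.exp (-(w * t)^2)‖
        = ‖(-2*w*(t:ℂ)^2)‖ * ‖Complex.exp (-(w * t)^2)‖ := norm_mul _ _
      _ ≤ 2*(‖z‖+1) * Real.exp ((‖z‖+1)^2) := by
          apply mul_le_mul h1 h2 (norm_nonneg _) (by positivity)
  · exact intervalIntegrable_const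
  · refine Filter.Eventually.of_forall fun t ht w hw => ?_
    have h1 : HasDerivAt (fun w : ℂ => w * (t:ℂ)) (t:ℂ) w := by
      simpa using (hasDerivAt_id w).mul_const (t:ℂ)
    have h2 := ((h1.pow 2).neg).cexp
    refine h2.congr_deriv ?_
    simp only [Pi.neg_apply, Pi.pow_apply]
    ring


lemma integral_step (z : ℂ) :
    (∫ t in (0:ℝ)..1, Complex.exp (-(z * t)^2))
      + z * ∫ t in (0:ℝ)..1, (-2*z*(t:ℂ)^2) * Complex.exp (-(z * t)^2)
    = Complex.exp (-z^2) := by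
  have key : ∀ t ∈ Set.uIcc (0:ℝ) 1,
      HasDerivAt (fun t : ℝ => (t:ℂ) * Complex.exp (-(z * t)^2))
        (Complex.exp (-(z * t)^2) + z * ((-2*z*(t:ℂ)^2) * Complex.exp (-(z * t)^2))) t := by
    intro t _
    have hid : HasDerivAt (fun t : ℝ => (t:ℂ)) 1 t := by
      simpa using (hasDerivAt_id t).ofReal_comp
    have hzt : HasDerivAt (fun t : ℝ => z * (t:ℂ)) z t := by
      simpa using hid.const_mul z
    have hexp : HasDerivAt (fun t : ℝ => Complex.exp (-(z * t)^2))
        (Complex.exp (-(z * t)^2) * (-(z * (z * t) + (z * t) * z))) t := by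
      simpa [pow_two] using ((hzt.mul hzt).neg).cexp
    have := hid.mul hexp
    refine this.congr_deriv ?_
    push_cast
    ring
  have hcont : Continuous fun t : ℝ =>
      Complex.exp (-(z * t)^2) + z * ((-2*z*(t:ℂ)^2) * Complex.exp (-(z * t)^2)) := by fun_prop
  have hftc := intervalIntegral.integral_eq_sub_of_hasDerivAt key (hcont.intervalIntegrable 0 1)
  have hint1 : IntervalIntegrable (fun t : ℝ => Complex.exp (-(z * t)^2)) MeasureTheory.volume 0 1 := by
    apply Continuous.intervalIntegrable; fun_prop
  have hint2 : IntervalIntegrable (fun t : ℝ => z * ((-2*z*(t:ℂ)^2) * Complex.exp (-(z * t)^2)))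
      MeasureTheory.volume 0 1 := by
    apply Continuous.intervalIntegrable; fun_prop
  rw [intervalIntegral.integral_add hint1 hint2, intervalIntegral.integral_const_mul] at hftc
  simpa using hftc

lemma hasDerivAt_cerf (z : ℂ) :
    HasDerivAt cerf (((2 / Real.sqrt Real.pi : ℝ) : ℂ) * Complex.exp (-z^2)) z := by
  have h := ((hasDerivAt_id z).mul (hasDerivAt_g z)).const_mul ((2 / Real.sqrt Real.pi : ℝ) : ℂ)
  have heq : cerf = fun z : ℂ =>
      ((2 / Real.sqrt Real.pi : ℝ) : ℂ) * (id z * ∫ t in (0:ℝ)..1, Complex.exp (-(z * t)^2)) := by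
    funext w; simp [cerf, mul_assoc]
  rw [heq]
  refine h.congr_deriv ?_
  rw [← integral_step z]
  simp


lemma key_deriv (ε : ℝ) (hε : 0 < ε) (a C : ℂ) (μ : ℝ) :
    HasDerivAt (fun μ' : ℝ => (cerf (((μ':ℂ) + a)/(Real.sqrt (2*ε) : ℂ)) - C) *
        Complex.exp (((μ':ℂ) + a)^2/(2*(ε:ℂ))))
      (((2 / Real.sqrt Real.pi : ℝ) : ℂ)/(Real.sqrt (2*ε) : ℂ)
        + (((μ:ℂ) + a)/(ε:ℂ)) * ((cerf (((μ:ℂ) + a)/(Real.sqrt (2*ε) : ℂ)) - C) *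
            Complex.exp (((μ:ℂ) + a)^2/(2*(ε:ℂ))))) μ := by
  set s : ℂ := (Real.sqrt (2*ε) : ℂ) with hs_def
  have hsr : (0:ℝ) < Real.sqrt (2*ε) := Real.sqrt_pos.mpr (by linarith)
  have hs : s ≠ 0 := by
    simp only [hs_def, ne_eq, Complex.ofReal_eq_zero]; exact ne_of_gt hsr
  have hs2 : s^2 = 2*(ε:ℂ) := by
    rw [hs_def, ← Complex.ofReal_pow, Real.sq_sqrt (by linarith)]; push_cast; ring
  have hε' : (ε:ℂ) ≠ 0 := by
    simp only [ne_eq, Complex.ofReal_eq_zero]; exact ne_of_gt hε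
  have hid : HasDerivAt (fun μ' : ℝ => ((μ':ℂ) + a)) 1 μ := by
    simpa using ((hasDerivAt_id μ).ofReal_comp).add_const a
  have hw : HasDerivAt (fun μ' : ℝ => ((μ':ℂ) + a)/s) (1/s) μ := hid.div_const s
  have hc : HasDerivAt (fun μ' : ℝ => cerf (((μ':ℂ) + a)/s))
      ((((2 / Real.sqrt Real.pi : ℝ) : ℂ) * Complex.exp (-((((μ:ℂ) + a)/s))^2)) * (1/s)) μ :=
    (hasDerivAt_cerf _).comp μ hw
  have hsq : HasDerivAt (fun μ' : ℝ => ((μ':ℂ) + a)^2/(2*(ε:ℂ)))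
      ((((μ:ℂ)+a) + ((μ:ℂ)+a))/(2*(ε:ℂ))) μ := by
    have := (hid.mul hid).div_const (2*(ε:ℂ))
    simpa [pow_two, mul_comm] using this
  have hE := hsq.cexp
  have hprod := (hc.sub_const C).mul hE
  refine hprod.congr_deriv ?_
  have hone : Complex.exp (-((((μ:ℂ) + a)/s))^2) * Complex.exp (((μ:ℂ) + a)^2/(2*(ε:ℂ))) = 1 := by
    have h0 : -(((μ:ℂ) + a) / s) ^ 2 + ((μ:ℂ) + a) ^ 2 / (2 * (ε:ℂ)) = 0 := by
      rw [div_pow, hs2]; ring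
    rw [← Complex.exp_add, h0, Complex.exp_zero]
  linear_combination (((2 / Real.sqrt Real.pi : ℝ) : ℂ)/s) * hone

theorem stmt_8 (ε ω₀ μ₀ p₁ p₂ : ℝ) (hε : 0 < ε) (hω₀ : 0 < ω₀) (d : ℂ)
    (Ap : ℝ → ℝ → ℂ)
    (hAp : ∀ x μ : ℝ, Ap x μ =
      (Real.sqrt (Real.pi/2) : ℂ) * (p₁ : ℂ) *
        (cerf (((μ:ℂ) + Complex.I*ω₀)/(Real.sqrt (2*ε) : ℂ))
          - cerf (((μ₀:ℂ) + Complex.I*ω₀)/(Real.sqrt (2*ε) : ℂ))) *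
        Complex.exp (((μ:ℂ) + Complex.I*ω₀)^2/(2*(ε:ℂ)))
      + (Real.sqrt (Real.pi/2) : ℂ) * (p₂ : ℂ) * (Real.cos x : ℂ) *
        (cerf (((μ:ℂ) + Complex.I*ω₀ - (ε:ℂ)*d)/(Real.sqrt (2*ε) : ℂ))
          - cerf (((μ₀:ℂ) + Complex.I*ω₀ - (ε:ℂ)*d)/(Real.sqrt (2*ε) : ℂ))) *
        Complex.exp (((μ:ℂ) + Complex.I*ω₀ - (ε:ℂ)*d)^2/(2*(ε:ℂ)))) :
    (∀ x μ : ℝ, (ε:ℂ) * deriv (fun μ' => Ap x μ') μ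
      = ((μ:ℂ) + Complex.I*ω₀) * Ap x μ
        + (Real.sqrt ε : ℂ) * ((p₁ : ℂ) + (p₂ : ℂ) * (Real.cos x : ℂ))
        + (ε:ℂ) * d * deriv (fun x' => deriv (fun x'' => Ap x'' μ) x') x)
    ∧ ∀ x : ℝ, Ap x μ₀ = 0 := by
  constructor
  · intro x μ
    set s : ℂ := (Real.sqrt (2*ε) : ℂ) with hs_def
    have hsr : (0:ℝ) < Real.sqrt (2*ε) := Real.sqrt_pos.mpr (by linarith)
    have hs : s ≠ 0 := by
      simp only [hs_def, ne_eq, Complex.ofReal_eq_zero]; exact ne_of_gt hsr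
    have hε' : (ε:ℂ) ≠ 0 := by
      simp only [ne_eq, Complex.ofReal_eq_zero]; exact ne_of_gt hε
    set k : ℂ := (Real.sqrt (Real.pi/2) : ℂ) with hk_def
    set c : ℂ := ((2 / Real.sqrt Real.pi : ℝ) : ℂ) with hc_def
    set a₁ : ℂ := Complex.I*ω₀ with ha1_def
    set a₂ : ℂ := Complex.I*ω₀ - (ε:ℂ)*d with ha2_def
    set C₁ : ℂ := cerf (((μ₀:ℂ) + a₁)/s) with hC1_def
    set C₂ : ℂ := cerf (((μ₀:ℂ) + a₂)/s) with hC2_def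
    have harg : ∀ μ' : ℝ, (μ':ℂ) + Complex.I*ω₀ - (ε:ℂ)*d = (μ':ℂ) + a₂ := fun _ => by
      rw [ha2_def]; ring
    -- μ derivative
    have h1 := (key_deriv ε hε a₁ C₁ μ).const_mul (k * p₁)
    have h2 := (key_deriv ε hε a₂ C₂ μ).const_mul (k * p₂ * (Real.cos x : ℂ))
    have hA : (fun μ' : ℝ => Ap x μ') = fun μ' : ℝ =>
        (k * p₁) * ((cerf (((μ':ℂ) + a₁)/s) - C₁) * Complex.exp (((μ':ℂ) + a₁)^2/(2*(ε:ℂ))))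
        + (k * p₂ * (Real.cos x : ℂ)) *
          ((cerf (((μ':ℂ) + a₂)/s) - C₂) * Complex.exp (((μ':ℂ) + a₂)^2/(2*(ε:ℂ)))) := by
      funext μ'
      rw [hAp, harg, harg]
      ring
    have hderivμ : deriv (fun μ' => Ap x μ') μ =
        (k * p₁) * (c/s + (((μ:ℂ) + a₁)/(ε:ℂ)) *
          ((cerf (((μ:ℂ) + a₁)/s) - C₁) * Complex.exp (((μ:ℂ) + a₁)^2/(2*(ε:ℂ)))))
        + (k * p₂ * (Real.cos x : ℂ)) * (c/s + (((μ:ℂ) + a₂)/(ε:ℂ)) *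
          ((cerf (((μ:ℂ) + a₂)/s) - C₂) * Complex.exp (((μ:ℂ) + a₂)^2/(2*(ε:ℂ))))) := by
      rw [hA]
      exact (h1.add h2).deriv
    -- x derivatives
    set c₀ : ℂ := k * p₁ * (cerf (((μ:ℂ) + a₁)/s) - C₁) * Complex.exp (((μ:ℂ) + a₁)^2/(2*(ε:ℂ)))
      with hc0_def
    set c₂ : ℂ := k * p₂ * ((cerf (((μ:ℂ) + a₂)/s) - C₂) * Complex.exp (((μ:ℂ) + a₂)^2/(2*(ε:ℂ))))
      with hc2_def
    have hxfun : (fun x'' : ℝ => Ap x'' μ) = fun x'' : ℝ => c₀ + c₂ * (Real.cos x'' : ℂ) := by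
      funext x''
      rw [hAp, harg, harg, hc0_def, hc2_def]
      ring
    have hinner : deriv (fun x'' : ℝ => Ap x'' μ) = fun x' : ℝ => c₂ * ((-Real.sin x' : ℝ) : ℂ) := by
      funext x'
      rw [hxfun]
      exact ((hasDerivAt_const x' c₀).add (((Real.hasDerivAt_cos x').ofReal_comp).const_mul c₂)).deriv.trans (by push_cast; ring)
    have hderivx : deriv (fun x' => deriv (fun x'' => Ap x'' μ) x') x
        = c₂ * ((-Real.cos x : ℝ) : ℂ) := by
      rw [hinner]
      exact ((((Real.hasDerivAt_sin x).neg).ofReal_comp).const_mul c₂).deriv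
    -- key scalar identity
    have hreal : Real.sqrt (Real.pi/2) * (2 / Real.sqrt Real.pi) * ε
        = Real.sqrt ε * Real.sqrt (2*ε) := by
      have hb : Real.sqrt ε * Real.sqrt (2*ε) = Real.sqrt 2 * ε := by
        rw [← Real.sqrt_mul hε.le, show ε*(2*ε) = 2*ε^2 by ring,
          Real.sqrt_mul (by norm_num : (0:ℝ) ≤ 2), Real.sqrt_sq hε.le]
      have ha : Real.sqrt (Real.pi/2) * (2 / Real.sqrt Real.pi) = Real.sqrt 2 := by
        rw [Real.sqrt_div Real.pi_pos.le]
        have h2n : Real.sqrt 2 ≠ 0 := by positivity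
        have hπ : Real.sqrt Real.pi ≠ 0 := by positivity
        have h22 : Real.sqrt 2 * Real.sqrt 2 = 2 := Real.mul_self_sqrt (by norm_num)
        field_simp
        linear_combination (-1) * h22
      rw [ha, hb]
    have hkeyC : k * c * (ε:ℂ) = (Real.sqrt ε : ℂ) * s := by
      rw [hk_def, hc_def, hs_def]
      exact_mod_cast hreal
    rw [hderivμ, hderivx, hAp, harg, harg]
    simp only [Complex.ofReal_neg, Complex.ofReal_cos]
    field_simp
    have hE2 : ∀ z : ℂ, Complex.exp (z/((ε:ℂ)*2)) = Complex.exp (z/(2*(ε:ℂ))) := fun z => by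
      rw [mul_comm]
    linear_combination ((p₁ : ℂ) + (p₂ : ℂ) * Complex.cos (x:ℂ)) * hkeyC
      - k * (ε:ℂ) * s * (p₂ : ℂ) * Complex.cos (x:ℂ) * d * (cerf (((μ:ℂ) + a₂)/s) - C₂)
        * hE2 (((μ:ℂ) + a₂)^2)
  · intro x
    rw [hAp]
    simp
end

section
/- For the Shishkova-type zero-diffusivity limit: if A_p(μ) = (√(2π)·I_a + R(ε))·e^{(μ+iω₀)²/(2ε)} with |R(ε)| ≤ C√ε and I_a > 0, then the solution μ* > 0 of |A_p(μ*)| = 1 satisfies μ*² = ω₀² - 2ε ln(√(2π) I_a) + o(ε) as ε → 0⁺; in particular μ* → ω₀ as ε → 0⁺. -/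
open Filter Topology Asymptotics

theorem stmt_18 (ω₀ Ia C ε₀ : ℝ) (hω₀ : 0 < ω₀) (hIa : 0 < Ia) (hC : 0 < C)
    (hε₀ : 0 < ε₀)
    (R : ℝ → ℂ)
    (hR : ∀ ε ∈ Set.Ioo (0:ℝ) ε₀, ‖R ε‖ ≤ C * Real.sqrt ε)
    (hne : ∀ ε ∈ Set.Ioo (0:ℝ) ε₀, ((Real.sqrt (2*Real.pi) * Ia : ℝ) : ℂ) + R ε ≠ 0)
    (μs : ℝ → ℝ)
    (hμs : ∀ ε ∈ Set.Ioo (0:ℝ) ε₀, 0 < μs ε ∧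
      ‖((Real.sqrt (2*Real.pi) * Ia : ℝ) : ℂ) + R ε‖
        * Real.exp (((μs ε)^2 - ω₀^2)/(2*ε)) = 1) :
    (fun ε => (μs ε)^2 - (ω₀^2 - 2*ε*Real.log (Real.sqrt (2*Real.pi) * Ia)))
        =o[𝓝[>] (0:ℝ)] (fun ε => ε)
    ∧ Tendsto μs (𝓝[>] (0:ℝ)) (𝓝 ω₀) := by
  set S : ℝ := Real.sqrt (2*Real.pi) * Ia with hSdef
  have hS : 0 < S := mul_pos (Real.sqrt_pos.2 (by positivity)) hIa
  set a : ℝ → ℝ := fun ε => ‖((S:ℝ) : ℂ) + R ε‖ with hadef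
  -- eventually membership in Ioo
  have hmem : ∀ᶠ ε in 𝓝[>] (0:ℝ), ε ∈ Set.Ioo (0:ℝ) ε₀ :=
    Ioo_mem_nhdsGT_of_mem ⟨le_refl 0, hε₀⟩
  -- key identity
  have key : ∀ ε ∈ Set.Ioo (0:ℝ) ε₀,
      (μs ε)^2 - ω₀^2 = (2*ε) * (- Real.log (a ε)) := by
    intro ε hε
    have hεpos : 0 < ε := hε.1
    have hane : a ε ≠ 0 := by
      simpa [hadef] using (norm_ne_zero_iff.mpr (hne ε hε))
    have hapos : 0 < a ε := (norm_pos_iff.mpr (hne ε hε))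
    have heq := (hμs ε hε).2
    have hexp : Real.exp (((μs ε)^2 - ω₀^2)/(2*ε)) = (a ε)⁻¹ := by
      field_simp at heq ⊢
      linarith [heq]
    have hlog := congrArg Real.log hexp
    rw [Real.log_exp, Real.log_inv] at hlog
    have h2ε : (2*ε) ≠ 0 := by positivity
    field_simp at hlog
    linear_combination hlog
  -- a tends to S
  have haS : Tendsto a (𝓝[>] (0:ℝ)) (𝓝 S) := by
    rw [tendsto_iff_dist_tendsto_zero]
    have hb : Tendsto (fun ε : ℝ => C * Real.sqrt ε) (𝓝[>] (0:ℝ)) (𝓝 0) := by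
      have : Tendsto (fun ε : ℝ => Real.sqrt ε) (𝓝 (0:ℝ)) (𝓝 0) := by
        simpa using Real.continuous_sqrt.continuousAt (x := (0:ℝ)).tendsto
      have h2 : Tendsto (fun ε : ℝ => C * Real.sqrt ε) (𝓝 (0:ℝ)) (𝓝 (C * 0)) :=
        this.const_mul C
      have h3 := h2.mono_left (nhdsWithin_le_nhds (s := Set.Ioi (0:ℝ)))
      simpa using h3
    apply squeeze_zero_norm' _ hb
    filter_upwards [hmem] with ε hε
    have h1 : dist (a ε) S ≤ ‖R ε‖ := by
      have : dist (a ε) S = |‖((S:ℝ):ℂ) + R ε‖ - ‖((S:ℝ):ℂ)‖| := by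
        simp [hadef, Real.dist_eq, Complex.norm_real, Real.norm_eq_abs, abs_of_pos hS]
      rw [this]
      have := abs_norm_sub_norm_le (((S:ℝ):ℂ) + R ε) ((S:ℝ):ℂ)
      simpa using this
    calc ‖dist (a ε) S‖ = dist (a ε) S := by
          simp [Real.norm_eq_abs, abs_of_nonneg dist_nonneg]
      _ ≤ ‖R ε‖ := h1
      _ ≤ C * Real.sqrt ε := hR ε hε
  have hapos' : ∀ᶠ ε in 𝓝[>] (0:ℝ), 0 < a ε := by
    filter_upwards [hmem] with ε hε
    exact norm_pos_iff.mpr (hne ε hε)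
  have hlogT : Tendsto (fun ε => Real.log (a ε)) (𝓝[>] (0:ℝ)) (𝓝 (Real.log S)) :=
    haS.log hS.ne'
  -- little-o part
  have hg : Tendsto (fun ε => 2 * (Real.log S - Real.log (a ε))) (𝓝[>] (0:ℝ)) (𝓝 0) := by
    have := (tendsto_const_nhds (x := Real.log S) (f := 𝓝[>] (0:ℝ))).sub hlogT
    simpa using this.const_mul 2
  have hsmall : (fun ε => ε * (2 * (Real.log S - Real.log (a ε))))
      =o[𝓝[>] (0:ℝ)] (fun ε => ε) := by
    have h1 : (fun ε : ℝ => ε) =O[𝓝[>] (0:ℝ)] (fun ε => ε) := isBigO_refl _ _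
    have h2 : (fun ε => 2 * (Real.log S - Real.log (a ε))) =o[𝓝[>] (0:ℝ)]
        (fun _ : ℝ => (1:ℝ)) := (isLittleO_one_iff ℝ).2 hg
    simpa using h1.mul_isLittleO h2
  have heqv : (fun ε => (μs ε)^2 - (ω₀^2 - 2*ε*Real.log S))
      =ᶠ[𝓝[>] (0:ℝ)] (fun ε => ε * (2 * (Real.log S - Real.log (a ε)))) := by
    filter_upwards [hmem] with ε hε
    have := key ε hε
    ring_nf
    ring_nf at this
    linarith [this]
  refine ⟨hsmall.congr' heqv.symm (EventuallyEq.refl _ _), ?_⟩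
  -- convergence of μs
  have hsq : Tendsto (fun ε => (μs ε)^2) (𝓝[>] (0:ℝ)) (𝓝 (ω₀^2)) := by
    have hεT : Tendsto (fun ε : ℝ => ε) (𝓝[>] (0:ℝ)) (𝓝 0) :=
      tendsto_id.mono_right nhdsWithin_le_nhds
    have hT : Tendsto (fun ε => ω₀^2 + (2*ε) * (- Real.log (a ε))) (𝓝[>] (0:ℝ))
        (𝓝 (ω₀^2)) := by
      have := ((hεT.const_mul 2).mul hlogT.neg)
      have h := (tendsto_const_nhds (x := ω₀^2) (f := 𝓝[>] (0:ℝ))).add this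
      simpa using h
    apply hT.congr'
    filter_upwards [hmem] with ε hε
    have := key ε hε
    linarith [this]
  have hfin : Tendsto (fun ε => Real.sqrt ((μs ε)^2)) (𝓝[>] (0:ℝ)) (𝓝 ω₀) := by
    have := (Real.continuous_sqrt.continuousAt.tendsto).comp hsq
    simpa [Function.comp_def, Real.sqrt_sq hω₀.le] using this
  apply hfin.congr'
  filter_upwards [hmem] with ε hε
  exact Real.sqrt_sq (hμs ε hε).1.le
end
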